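/- Let a > b > 0 and m, ρ > 0. Define F₂(θ) = −a·√(m + ρπa²)·artanh(√((a²−b²)ρπ)·cos θ/√(m + ρπa²))/√(ρπ(a²−b²)). Then for every θ ∈ (0, π/2), F₂ is differentiable at θ with F₂'(θ) = V₂(θ) = a (m + ρπa²) sin θ / (m + ρπ b² cos²θ + ρπ a² sin²θ). -/

import Mathlib

open Real Set

/-- The inverse hyperbolic tangent. -/
noncomputable def artanh (x : ℝ) : ℝ := (1 / 2) * Real.log ((1 + x) / (1 - x))

lemma hasDerivAt_artanh {x : ℝ} (h1 : -1 < x) (h2 : x < 1) :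
    HasDerivAt _root_.artanh (1 / (1 - x ^ 2)) x := by
  have h1' : 0 < 1 + x := by linarith
  have h2' : 0 < 1 - x := by linarith
  have hl1 : HasDerivAt (fun y : ℝ => Real.log (1 + y)) (1 / (1 + x)) x := by
    have := (HasDerivAt.const_add 1 (hasDerivAt_id x)).log (ne_of_gt h1')
    simpa using this
  have hl2 : HasDerivAt (fun y : ℝ => Real.log (1 - y)) (-1 / (1 - x)) x := by
    have := (HasDerivAt.const_sub 1 (hasDerivAt_id x)).log (ne_of_gt h2')
    simpa using this
  have hd : HasDerivAt (fun y : ℝ => (1 / 2) * (Real.log (1 + y) - Real.log (1 - y)))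
      (1 / (1 - x ^ 2)) x := by
    have := (hl1.sub hl2).const_mul (1 / 2 : ℝ)
    refine this.congr_deriv (Eq.symm ?_)
    have hne : (1:ℝ) - x ^ 2 ≠ 0 := by nlinarith
    have h1n : (1:ℝ) + x ≠ 0 := ne_of_gt h1'
    have h2n : (1:ℝ) - x ≠ 0 := ne_of_gt h2'
    field_simp
    ring
  apply hd.congr_of_eventuallyEq
  have hmem : Set.Ioo (-1 : ℝ) 1 ∈ nhds x := Ioo_mem_nhds h1 h2
  filter_upwards [hmem] with y hy
  have hy1 : (1 : ℝ) + y ≠ 0 := by linarith [hy.1]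
  have hy2 : (1 : ℝ) - y ≠ 0 := by linarith [hy.2]
  simp only [_root_.artanh, Real.log_div hy1 hy2]

/-- `F₂(θ) = −a·√(m+ρπa²)·artanh(√((a²−b²)ρπ)·cos θ/√(m+ρπa²))/√(ρπ(a²−b²))` is an
antiderivative of the ideal-fluid dynamics coefficient
`V₂(θ) = a (m + ρπa²) sin θ / (m + ρπ b² cos²θ + ρπ a² sin²θ)` on `(0, π/2)`. -/
theorem deriv_F2 (a b m ρ : ℝ) (hb : 0 < b) (hba : b < a) (hm : 0 < m) (hρ : 0 < ρ)
    (F₂ : ℝ → ℝ)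
    (hF₂ : ∀ θ : ℝ, F₂ θ =
      -a * Real.sqrt (m + ρ * π * a ^ 2) *
        _root_.artanh (Real.sqrt ((a ^ 2 - b ^ 2) * ρ * π) * Real.cos θ /
          Real.sqrt (m + ρ * π * a ^ 2)) / Real.sqrt (ρ * π * (a ^ 2 - b ^ 2))) :
    ∀ θ ∈ Set.Ioo (0:ℝ) (π / 2),
      HasDerivAt F₂ (a * (m + ρ * π * a ^ 2) * Real.sin θ /
        (m + ρ * π * b ^ 2 * Real.cos θ ^ 2 + ρ * π * a ^ 2 * Real.sin θ ^ 2)) θ := by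
  intro θ hθ
  have hπ : (0:ℝ) < π := Real.pi_pos
  have hab2 : 0 < a ^ 2 - b ^ 2 := by nlinarith
  set c := Real.sqrt ((a ^ 2 - b ^ 2) * ρ * π) with hc
  set s := Real.sqrt (m + ρ * π * a ^ 2) with hs
  have hc0 : 0 < c := Real.sqrt_pos.2 (by positivity)
  have hs0 : 0 < s := Real.sqrt_pos.2 (by positivity)
  have hc2 : c ^ 2 = (a ^ 2 - b ^ 2) * ρ * π := Real.sq_sqrt (by positivity)
  have hs2 : s ^ 2 = m + ρ * π * a ^ 2 := Real.sq_sqrt (by positivity)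
  have hcs : c < s := by
    have : c ^ 2 < s ^ 2 := by rw [hc2, hs2]; nlinarith
    nlinarith
  have hcosθ0 : 0 < Real.cos θ := Real.cos_pos_of_mem_Ioo ⟨by linarith [hθ.1], hθ.2⟩
  have hcosθ1 : Real.cos θ ≤ 1 := Real.cos_le_one θ
  set x := c * Real.cos θ / s with hx
  have hx1 : -1 < x := by
    have : 0 < x := by positivity
    linarith
  have hx2 : x < 1 := by
    rw [hx, div_lt_one hs0]
    nlinarith
  have hg : HasDerivAt (fun t => c * Real.cos t / s) (c * (-Real.sin θ) / s) θ :=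
    ((Real.hasDerivAt_cos θ).const_mul c).div_const s
  have hcomp := ((hasDerivAt_artanh hx1 hx2).comp θ hg).const_mul (-a * s)
  have hfinal := hcomp.div_const c
  simp only [Function.comp_def] at hfinal
  have heq : (fun t => -a * s * _root_.artanh (c * Real.cos t / s) / c) = F₂ := by
    funext t
    rw [hF₂ t]
    congr 1
    rw [show ρ * π * (a ^ 2 - b ^ 2) = (a ^ 2 - b ^ 2) * ρ * π by ring]
  rw [heq] at hfinal
  refine hfinal.congr_deriv (Eq.symm ?_)
  have hsin2 : Real.sin θ ^ 2 = 1 - Real.cos θ ^ 2 := by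
    have := Real.sin_sq_add_cos_sq θ; linarith
  have key : s ^ 2 - c ^ 2 * Real.cos θ ^ 2
      = m + ρ * π * b ^ 2 * Real.cos θ ^ 2 + ρ * π * a ^ 2 * Real.sin θ ^ 2 := by
    rw [hs2, hc2, hsin2]; ring
  have hpos : 0 < s ^ 2 - c ^ 2 * Real.cos θ ^ 2 := by nlinarith
  rw [hx, ← hs2, ← key]
  have hxx : 1 - (c * Real.cos θ / s) ^ 2 = (s ^ 2 - c ^ 2 * Real.cos θ ^ 2) / s ^ 2 := by
    field_simp
  rw [hxx]
  rw [one_div_div]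
  field_simp [hpos.ne']
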